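/- Let n ≥ 3 and suppose n orthonormal bases {|y_{x_y}⟩}_{x_y=1}^d (y = 1,…,n) of ℂ^d form an n-fold unbiased set (nUB). Then for every k ∈ {1,…,n}, the n−1 bases obtained by omitting the k-th basis form an (n−1)-fold unbiased set; that is, for all choices of indices x_y ∈ [d] (y ≠ k), ∑_{σ an (n−1)-cycle on {1,…,n}\{k}} ∏_{y≠k} ⟨y_{x_y}|σ(y)_{x_{σ(y)}}⟩ = (n−2)!/d^{n−2}. -/

import Mathlib

open scoped InnerProductSpace

open scoped Classical in
/-- The set of full cycles (`card ι`-cycles) in the permutation group of `ι`. -/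
noncomputable def nCycles (ι : Type) [Fintype ι] [DecidableEq ι] : Finset (Equiv.Perm ι) :=
  Finset.univ.filter fun σ => σ.IsCycle ∧ σ.support = Finset.univ

/-- A family of `n` orthonormal bases of `ℂ^d` is `n`-fold unbiased (an `n`UB) if for every
index tuple `x`, the sum over all `n`-cycles `σ` of the cyclic products of overlaps equals
`(n-1)!/d^(n-1)`. -/
def IsNUB {ι : Type} [Fintype ι] [DecidableEq ι] {d : ℕ}
    (B : ι → OrthonormalBasis (Fin d) ℂ (EuclideanSpace ℂ (Fin d))) : Prop :=
  ∀ x : ι → Fin d,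
    (∑ σ ∈ nCycles ι, ∏ y, ⟪B y (x y), B (σ y) (x (σ y))⟫_ℂ)
      = ((Fintype.card ι - 1).factorial : ℂ) / (d : ℂ) ^ (Fintype.card ι - 1)

namespace NUBAux

variable {α : Type} [Fintype α] [DecidableEq α]

lemma mem_nCycles_iff {ι : Type} [Fintype ι] [DecidableEq ι] (σ : Equiv.Perm ι) (k : ι) :
    σ ∈ nCycles ι ↔ (∀ y, σ y ≠ y) ∧ ∀ y, σ.SameCycle k y := by
  classical
  rw [nCycles, Finset.mem_filter]
  constructor
  · rintro ⟨-, hc, hs⟩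
    have hfix : ∀ y, σ y ≠ y := fun y => Equiv.Perm.mem_support.mp (hs ▸ Finset.mem_univ y)
    exact ⟨hfix, fun y => hc.sameCycle (hfix k) (hfix y)⟩
  · rintro ⟨h1, h2⟩
    refine ⟨Finset.mem_univ _, ⟨k, h1 k, fun y _ => h2 y⟩, ?_⟩
    ext y; simp [Equiv.Perm.mem_support, h1 y]

/-- Delete the point `k` from a permutation of `α`. -/
def delFun (k : α) (σ : Equiv.Perm α) (y : {y : α // y ≠ k}) : {y : α // y ≠ k} :=
  if h : σ y.1 = k then ⟨σ k, fun hkk => y.2 (σ.injective (h.trans hkk.symm))⟩ else ⟨σ y.1, h⟩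

lemma delFun_injective (k : α) (σ : Equiv.Perm α) : Function.Injective (delFun k σ) := by
  intro a b hab
  unfold delFun at hab
  split_ifs at hab with h1 h2 h2
  · exact Subtype.ext (σ.injective (h1.trans h2.symm))
  · exact absurd (σ.injective (Subtype.ext_iff.mp hab)).symm b.2
  · exact absurd (σ.injective (Subtype.ext_iff.mp hab)) a.2
  · exact Subtype.ext (σ.injective (Subtype.ext_iff.mp hab))

noncomputable def del (k : α) (σ : Equiv.Perm α) : Equiv.Perm {y : α // y ≠ k} :=
  Equiv.ofBijective _ (Finite.injective_iff_bijective.mp (delFun_injective k σ))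

lemma del_apply_of_ne (k : α) (σ : Equiv.Perm α) (y : {y : α // y ≠ k}) (h : σ y.1 ≠ k) :
    (del k σ y : α) = σ y.1 := by
  show (delFun k σ y : α) = σ y.1
  rw [delFun, dif_neg h]

lemma del_apply_of_eq (k : α) (σ : Equiv.Perm α) (y : {y : α // y ≠ k}) (h : σ y.1 = k) :
    (del k σ y : α) = σ k := by
  show (delFun k σ y : α) = σ k
  rw [delFun, dif_pos h]

/-- Insert the point `k` into a permutation of `α \ {k}`, right after `p`. -/
def ins (k : α) (τ : Equiv.Perm {y : α // y ≠ k}) (p : {y : α // y ≠ k}) : Equiv.Perm α :=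
  (Equiv.swap k (τ p : α)) * (τ.extendDomain (Equiv.refl {y : α // y ≠ k}))

lemma ins_apply_k (k : α) (τ : Equiv.Perm {y : α // y ≠ k}) (p : {y : α // y ≠ k}) :
    ins k τ p k = (τ p : α) := by
  have h1 : τ.extendDomain (Equiv.refl {y : α // y ≠ k}) k = k :=
    Equiv.Perm.extendDomain_apply_not_subtype _ _ (by simp)
  simp [ins, h1, Equiv.swap_apply_left]

lemma ext_apply (k : α) (τ : Equiv.Perm {y : α // y ≠ k}) (y : {y : α // y ≠ k}) :
    τ.extendDomain (Equiv.refl {y : α // y ≠ k}) (y : α) = (τ y : α) := by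
  rw [Equiv.Perm.extendDomain_apply_subtype (b := (y : α)) _ _ y.2]
  simp

lemma ins_apply_p (k : α) (τ : Equiv.Perm {y : α // y ≠ k}) (p : {y : α // y ≠ k}) :
    ins k τ p (p : α) = k := by
  simp [ins, ext_apply, Equiv.swap_apply_right]

lemma ins_apply_ne (k : α) (τ : Equiv.Perm {y : α // y ≠ k}) (p : {y : α // y ≠ k})
    (y : {y : α // y ≠ k}) (hy : y ≠ p) : ins k τ p (y : α) = (τ y : α) := by
  have h1 : (τ y : α) ≠ k := (τ y).2
  have h2 : (τ y : α) ≠ (τ p : α) := fun h => hy (τ.injective (Subtype.ext h))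
  simp [ins, ext_apply, Equiv.swap_apply_of_ne_of_ne h1 h2]

lemma del_ins (k : α) (τ : Equiv.Perm {y : α // y ≠ k}) (p : {y : α // y ≠ k}) :
    del k (ins k τ p) = τ := by
  ext y
  rcases eq_or_ne y p with rfl | hy
  · rw [del_apply_of_eq k _ y (ins_apply_p k τ y), ins_apply_k]
  · rw [del_apply_of_ne k _ y (by rw [ins_apply_ne k τ p y hy]; exact (τ y).2),
      ins_apply_ne k τ p y hy]

lemma ins_del (k : α) (σ : Equiv.Perm α) (hk : σ k ≠ k) (hp : σ⁻¹ k ≠ k) :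
    ins k (del k σ) ⟨σ⁻¹ k, hp⟩ = σ := by
  set p : {y : α // y ≠ k} := ⟨σ⁻¹ k, hp⟩
  have hσp : σ (p : α) = k := σ.apply_symm_apply k
  ext y
  rcases eq_or_ne y k with h | hyk
  · rw [h, ins_apply_k, del_apply_of_eq k σ p hσp]
  · rcases eq_or_ne y (p : α) with rfl | hyp
    · rw [ins_apply_p, hσp]
    · have h2 : σ y ≠ k := by
        intro h
        apply hyp
        exact (σ.symm_apply_apply y).symm.trans (congrArg σ.symm h)
      exact (ins_apply_ne k (del k σ) p ⟨y, hyk⟩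
        (fun h => hyp (congrArg Subtype.val h))).trans
        (del_apply_of_ne k σ ⟨y, hyk⟩ h2)


lemma ins_mem_nCycles (k : α) (τ : Equiv.Perm {y : α // y ≠ k}) (p : {y : α // y ≠ k})
    (hτ : τ ∈ nCycles {y : α // y ≠ k}) : ins k τ p ∈ nCycles α := by
  obtain ⟨hfix, hsc⟩ := (mem_nCycles_iff τ p).mp hτ
  rw [mem_nCycles_iff (ins k τ p) k]
  constructor
  · intro y
    rcases eq_or_ne y k with h | hyk
    · rw [h, ins_apply_k]; exact (τ p).2
    · rcases eq_or_ne (⟨y, hyk⟩ : {y : α // y ≠ k}) p with h' | h'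
      · have hyp : y = (p : α) := congrArg Subtype.val h'
        rw [hyp, ins_apply_p]
        exact fun hh => p.2 hh.symm
      · have hy : ins k τ p y = ↑(τ ⟨y, hyk⟩) := ins_apply_ne k τ p ⟨y, hyk⟩ h'
        rw [hy]
        exact fun hh => hfix ⟨y, hyk⟩ (Subtype.ext hh)
  · have claim : ∀ m : ℕ, ∃ l : ℕ, ((ins k τ p) ^ l) k = ((τ ^ m) (τ p) : α) := by
      intro m
      induction m with
      | zero => exact ⟨1, by simpa [pow_one] using ins_apply_k k τ p⟩
      | succ m ih =>
        obtain ⟨l, hl⟩ := ih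
        rcases eq_or_ne ((τ ^ m) (τ p)) p with h | h
        · exact ⟨1, by rw [pow_one, ins_apply_k, pow_succ', Equiv.Perm.mul_apply, h]⟩
        · exact ⟨l + 1, by
            rw [pow_succ', pow_succ', Equiv.Perm.mul_apply, Equiv.Perm.mul_apply, hl,
              ins_apply_ne k τ p _ h]⟩
    intro z
    rcases eq_or_ne z k with h | hzk
    · rw [h]
    · have h1 : τ.SameCycle (τ p) ⟨z, hzk⟩ :=
        Equiv.Perm.sameCycle_apply_left.mpr (hsc ⟨z, hzk⟩)
      obtain ⟨m, -, hm⟩ := h1.exists_pow_eq'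
      obtain ⟨l, hl⟩ := claim m
      exact ⟨(l : ℤ), by rw [zpow_natCast, hl, hm]⟩

lemma del_mem_nCycles (k : α) (σ : Equiv.Perm α) (hσ : σ ∈ nCycles α)
    (hcard : 3 ≤ Fintype.card α) : del k σ ∈ nCycles {y : α // y ≠ k} := by
  obtain ⟨hfix, hsc⟩ := (mem_nCycles_iff σ k).mp hσ
  have hk : σ k ≠ k := hfix k
  set τ := del k σ with hτdef
  have hTne : ∀ (y : {y : α // y ≠ k}), σ y.1 ≠ k → (τ y : α) = σ y.1 :=
    fun y h => del_apply_of_ne k σ y h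
  have hTeq : ∀ (y : {y : α // y ≠ k}), σ y.1 = k → (τ y : α) = σ k :=
    fun y h => del_apply_of_eq k σ y h
  have claim : ∀ (m : ℕ) (a : {y : α // y ≠ k}), ∃ l : ℕ,
      ((τ ^ l) a : α) = (σ ^ m) a.1 ∨ ((σ ^ m) a.1 = k ∧ ((τ ^ l) a : α) = σ⁻¹ k) := by
    intro m a
    induction m with
    | zero => exact ⟨0, Or.inl rfl⟩
    | succ m ih =>
      obtain ⟨l, hl | ⟨h1, h2⟩⟩ := ih
      · rcases eq_or_ne (σ ((σ ^ m) a.1)) k with h | h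
        · refine ⟨l, Or.inr ⟨by rw [pow_succ', Equiv.Perm.mul_apply, h], ?_⟩⟩
          rw [hl]
          exact (Equiv.Perm.eq_inv_iff_eq).mpr h
        · refine ⟨l + 1, Or.inl ?_⟩
          rw [pow_succ', pow_succ', Equiv.Perm.mul_apply, Equiv.Perm.mul_apply,
            hTne ((τ ^ l) a) (by rw [hl]; exact h), hl]
      · refine ⟨l + 1, Or.inl ?_⟩
        have h3 : σ (((τ ^ l) a : α)) = k := by rw [h2]; exact σ.apply_symm_apply k
        rw [pow_succ', pow_succ', Equiv.Perm.mul_apply, Equiv.Perm.mul_apply,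
          hTeq _ h3, h1]
  rw [mem_nCycles_iff τ ⟨σ k, hk⟩]
  constructor
  · intro y hy
    rcases eq_or_ne (σ y.1) k with h | h
    · have h4 : σ k = y.1 := by rw [← hTeq y h, hy]
      have h5 : ∀ m : ℕ, (σ ^ m) k = k ∨ (σ ^ m) k = y.1 := by
        intro m
        induction m with
        | zero => exact Or.inl rfl
        | succ m ih =>
          rw [pow_succ', Equiv.Perm.mul_apply]
          rcases ih with h6 | h6
          · rw [h6]; exact Or.inr h4
          · rw [h6]; exact Or.inl h
      obtain ⟨z, hz⟩ : ∃ z : α, z ∉ ({k, y.1} : Finset α) := by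
        by_contra hcon
        push_neg at hcon
        have h7 : (Finset.univ : Finset α).card ≤ ({k, y.1} : Finset α).card :=
          Finset.card_le_card fun z _ => hcon z
        rw [Finset.card_univ] at h7
        have h8 : ({k, y.1} : Finset α).card ≤ 2 :=
          (Finset.card_insert_le _ _).trans (by simp)
        omega
      obtain ⟨m, -, hm⟩ := (hsc z).exists_pow_eq'
      rcases h5 m with h6 | h6
      · exact hz (by rw [← hm, h6]; exact Finset.mem_insert_self _ _)
      · exact hz (by rw [← hm, h6]; exact Finset.mem_insert_of_mem (Finset.mem_singleton_self _))
    · exact hfix y.1 (by rw [← hTne y h, hy])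
  · intro y
    obtain ⟨m, -, hm⟩ := (hsc y.1).exists_pow_eq'
    have hm0 : m ≠ 0 := by rintro rfl; rw [pow_zero] at hm; exact y.2 hm.symm
    obtain ⟨m', rfl⟩ : ∃ m', m = m' + 1 := ⟨m - 1, by omega⟩
    have hm' : (σ ^ m') (σ k) = y.1 := by
      rw [← Equiv.Perm.mul_apply, ← pow_succ]; exact hm
    obtain ⟨l, hl | ⟨h1, h2⟩⟩ := claim m' ⟨σ k, hk⟩
    · exact ⟨(l : ℤ), by rw [zpow_natCast]; exact Subtype.ext (by rw [hl]; exact hm')⟩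
    · exact absurd (hm'.symm.trans h1) y.2


lemma key_sum {d : ℕ}
    (B : α → OrthonormalBasis (Fin d) ℂ (EuclideanSpace ℂ (Fin d)))
    (k : α) (x : α → Fin d) (τ : Equiv.Perm {y : α // y ≠ k}) (p : {y : α // y ≠ k}) :
    (∑ j : Fin d, ∏ y : α,
        ⟪B y (Function.update x k j y),
          B (ins k τ p y) (Function.update x k j (ins k τ p y))⟫_ℂ)
      = ∏ y : {y : α // y ≠ k}, ⟪B y.1 (x y.1), B (τ y).1 (x (τ y).1)⟫_ℂ := by
  classical
  have hσk : ins k τ p k = ((τ p : α)) := ins_apply_k k τ p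
  have hσp : ins k τ p (p : α) = k := ins_apply_p k τ p
  set C : α → ℂ := fun y =>
    if h : y = k then 1 else ⟪B y (x y), B (τ ⟨y, h⟩).1 (x (τ ⟨y, h⟩).1)⟫_ℂ with hCdef
  have hC : ∀ y : {y : α // y ≠ k}, C y.1 = ⟪B y.1 (x y.1), B (τ y).1 (x (τ y).1)⟫_ℂ := by
    intro y
    simp only [hCdef, dif_neg y.2, Subtype.coe_eta]
  have hp_mem : (p : α) ∈ Finset.univ.erase k := Finset.mem_erase.mpr ⟨p.2, Finset.mem_univ _⟩
  have hRHS : (∏ y : {y : α // y ≠ k}, ⟪B y.1 (x y.1), B (τ y).1 (x (τ y).1)⟫_ℂ)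
      = C (p : α) * ∏ y ∈ (Finset.univ.erase k).erase (p : α), C y := by
    calc (∏ y : {y : α // y ≠ k}, ⟪B y.1 (x y.1), B (τ y).1 (x (τ y).1)⟫_ℂ)
        = ∏ y : {y : α // y ≠ k}, C y.1 :=
          Finset.prod_congr rfl fun y _ => (hC y).symm
      _ = ∏ y ∈ Finset.univ.erase k, C y :=
          (Finset.prod_subtype _ (fun y => by simp) C).symm
      _ = C (p : α) * ∏ y ∈ (Finset.univ.erase k).erase (p : α), C y :=
          (Finset.mul_prod_erase _ C hp_mem).symm
  have hterm : ∀ j : Fin d,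
      (∏ y : α, ⟪B y (Function.update x k j y),
          B (ins k τ p y) (Function.update x k j (ins k τ p y))⟫_ℂ)
        = (⟪B (p : α) (x (p : α)), B k j⟫_ℂ * ⟪B k j, B (τ p).1 (x (τ p).1)⟫_ℂ)
            * ∏ y ∈ (Finset.univ.erase k).erase (p : α), C y := by
    intro j
    set F : α → ℂ := fun y => ⟪B y (Function.update x k j y),
        B (ins k τ p y) (Function.update x k j (ins k τ p y))⟫_ℂ with hFdef
    have e1 : ∏ y : α, F y = F k * ∏ y ∈ Finset.univ.erase k, F y :=
      (Finset.mul_prod_erase Finset.univ F (Finset.mem_univ k)).symm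
    have e2 : ∏ y ∈ Finset.univ.erase k, F y
        = F (p : α) * ∏ y ∈ (Finset.univ.erase k).erase (p : α), F y :=
      (Finset.mul_prod_erase _ F hp_mem).symm
    have e3 : ∀ y ∈ (Finset.univ.erase k).erase (p : α), F y = C y := by
      intro y hy
      rw [Finset.mem_erase, Finset.mem_erase] at hy
      obtain ⟨hyp, hyk, -⟩ := hy
      have h2 : ins k τ p y = ((τ ⟨y, hyk⟩ : {y : α // y ≠ k}) : α) :=
        ins_apply_ne k τ p ⟨y, hyk⟩ (fun hq => hyp (congrArg Subtype.val hq))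
      simp only [hFdef, hCdef]
      rw [h2, Function.update_of_ne hyk, Function.update_of_ne (τ ⟨y, hyk⟩).2, dif_neg hyk]
    have ek : F k = ⟪B k j, B (τ p).1 (x (τ p).1)⟫_ℂ := by
      simp only [hFdef]
      rw [hσk, Function.update_self, Function.update_of_ne (τ p).2]
    have ep : F (p : α) = ⟪B (p : α) (x (p : α)), B k j⟫_ℂ := by
      simp only [hFdef]
      rw [hσp, Function.update_self, Function.update_of_ne p.2]
    rw [e1, e2, Finset.prod_congr rfl e3, ek, ep]
    ring
  calc (∑ j : Fin d, ∏ y : α,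
        ⟪B y (Function.update x k j y),
          B (ins k τ p y) (Function.update x k j (ins k τ p y))⟫_ℂ)
      = (∑ j : Fin d, ⟪B (p : α) (x (p : α)), B k j⟫_ℂ * ⟪B k j, B (τ p).1 (x (τ p).1)⟫_ℂ)
          * ∏ y ∈ (Finset.univ.erase k).erase (p : α), C y := by
        rw [Finset.sum_congr rfl fun j _ => hterm j, ← Finset.sum_mul]
    _ = ⟪B (p : α) (x (p : α)), B (τ p).1 (x (τ p).1)⟫_ℂ
          * ∏ y ∈ (Finset.univ.erase k).erase (p : α), C y := by
        rw [OrthonormalBasis.sum_inner_mul_inner]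
    _ = ∏ y : {y : α // y ≠ k}, ⟪B y.1 (x y.1), B (τ y).1 (x (τ y).1)⟫_ℂ := by
        rw [hRHS, hC p]

end NUBAux

/-- If `n ≥ 3` orthonormal bases of `ℂ^d` form an `n`UB, then omitting any one basis `k`,
the remaining `n - 1` bases form an `(n-1)`UB: for all index choices, the sum over all
`(n-1)`-cycles on `{1,…,n} \ {k}` of the cyclic overlap products equals `(n-2)!/d^(n-2)`. -/
theorem stmt_2 (n d : ℕ) (hn : 3 ≤ n)
    (B : Fin n → OrthonormalBasis (Fin d) ℂ (EuclideanSpace ℂ (Fin d)))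
    (hB : IsNUB B) (k : Fin n) (x : Fin n → Fin d) :
    (∑ σ ∈ nCycles {y : Fin n // y ≠ k},
        ∏ y : {y : Fin n // y ≠ k}, ⟪B y.1 (x y.1), B (σ y).1 (x (σ y).1)⟫_ℂ)
      = ((n - 2).factorial : ℂ) / (d : ℂ) ^ (n - 2) := by

  classical
  have hd : 0 < d := (x k).pos
  have hdC : (d : ℂ) ≠ 0 := Nat.cast_ne_zero.mpr hd.ne'
  set S := (∑ σ ∈ nCycles {y : Fin n // y ≠ k},
      ∏ y : {y : Fin n // y ≠ k}, ⟪B y.1 (x y.1), B (σ y).1 (x (σ y).1)⟫_ℂ) with hSdef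
  have hcardι : Fintype.card {y : Fin n // y ≠ k} = n - 1 := by
    rw [Fintype.card_subtype_compl, Fintype.card_subtype_eq, Fintype.card_fin]
  have hfixk : ∀ σ ∈ nCycles (Fin n), σ k ≠ k :=
    fun σ hσ => ((NUBAux.mem_nCycles_iff σ k).mp hσ).1 k
  have hinv : ∀ σ ∈ nCycles (Fin n), σ⁻¹ k ≠ k := by
    intro σ hσ h
    have h2 := congrArg σ h
    rw [show σ (σ⁻¹ k) = k from σ.apply_symm_apply k] at h2
    exact hfixk σ hσ h2.symm
  have step1 : ∀ j : Fin d,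
      (∑ σ ∈ nCycles (Fin n), ∏ y, ⟪B y (Function.update x k j y),
          B (σ y) (Function.update x k j (σ y))⟫_ℂ)
        = ((n - 1).factorial : ℂ) / (d : ℂ) ^ (n - 1) := by
    intro j
    have h := hB (Function.update x k j)
    rwa [Fintype.card_fin] at h
  have step2 : (∑ σ ∈ nCycles (Fin n), ∑ j : Fin d, ∏ y, ⟪B y (Function.update x k j y),
          B (σ y) (Function.update x k j (σ y))⟫_ℂ)
      = (d : ℂ) * (((n - 1).factorial : ℂ) / (d : ℂ) ^ (n - 1)) := by
    rw [Finset.sum_comm, Finset.sum_congr rfl fun j _ => step1 j, Finset.sum_const,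
      Finset.card_univ, Fintype.card_fin, nsmul_eq_mul]
  have step3 : (∑ σ ∈ nCycles (Fin n), ∑ j : Fin d, ∏ y, ⟪B y (Function.update x k j y),
          B (σ y) (Function.update x k j (σ y))⟫_ℂ)
      = ∑ q ∈ (nCycles {y : Fin n // y ≠ k}) ×ˢ (Finset.univ : Finset {y : Fin n // y ≠ k}),
          ∏ y : {y : Fin n // y ≠ k}, ⟪B y.1 (x y.1), B ((q.1) y).1 (x ((q.1) y).1)⟫_ℂ := by
    refine Finset.sum_bij' (fun σ hσ => (NUBAux.del k σ, ⟨σ⁻¹ k, hinv σ hσ⟩))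
      (fun q _ => NUBAux.ins k q.1 q.2) ?_ ?_ ?_ ?_ ?_
    · intro σ hσ
      exact Finset.mem_product.mpr
        ⟨NUBAux.del_mem_nCycles k σ hσ (by rw [Fintype.card_fin]; exact hn), Finset.mem_univ _⟩
    · intro q hq
      exact NUBAux.ins_mem_nCycles k q.1 q.2 (Finset.mem_product.mp hq).1
    · intro σ hσ
      exact NUBAux.ins_del k σ (hfixk σ hσ) (hinv σ hσ)
    · intro q hq
      have h1 : NUBAux.del k (NUBAux.ins k q.1 q.2) = q.1 := NUBAux.del_ins k q.1 q.2
      have h2 : (NUBAux.ins k q.1 q.2)⁻¹ k = (q.2 : Fin n) :=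
        (Equiv.Perm.inv_eq_iff_eq).mpr (NUBAux.ins_apply_p k q.1 q.2).symm
      exact Prod.ext h1 (Subtype.ext h2)
    · intro σ hσ
      rw [← NUBAux.key_sum B k x (NUBAux.del k σ) ⟨σ⁻¹ k, hinv σ hσ⟩,
        NUBAux.ins_del k σ (hfixk σ hσ) (hinv σ hσ)]
  have step4 : (∑ q ∈ (nCycles {y : Fin n // y ≠ k}) ×ˢ (Finset.univ : Finset {y : Fin n // y ≠ k}),
          ∏ y : {y : Fin n // y ≠ k}, ⟪B y.1 (x y.1), B ((q.1) y).1 (x ((q.1) y).1)⟫_ℂ)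
      = ((n - 1 : ℕ) : ℂ) * S := by
    rw [hSdef, Finset.mul_sum]
    simp only [Finset.sum_product]
    refine Finset.sum_congr rfl fun τ _ => ?_
    rw [Finset.sum_const, Finset.card_univ, hcardι, nsmul_eq_mul]
  have E : ((n - 1 : ℕ) : ℂ) * S = (d : ℂ) * (((n - 1).factorial : ℂ) / (d : ℂ) ^ (n - 1)) := by
    rw [← step4, ← step3, step2]
  obtain ⟨m, rfl⟩ : ∃ m, n = m + 3 := ⟨n - 3, by omega⟩
  have e1 : m + 3 - 1 = m + 2 := by omega
  have e2 : m + 3 - 2 = m + 1 := by omega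
  rw [e1] at E
  rw [e2]
  have hm2 : ((m + 2 : ℕ) : ℂ) ≠ 0 := Nat.cast_ne_zero.mpr (by omega)
  have hfacC : ((m + 2).factorial : ℂ) = ((m + 2 : ℕ) : ℂ) * ((m + 1).factorial : ℂ) := by
    rw [show m + 2 = (m + 1) + 1 by omega, Nat.factorial_succ]
    push_cast
    ring
  have hpow : (d : ℂ) ^ (m + 2) = (d : ℂ) ^ (m + 1) * d := by
    rw [show m + 2 = (m + 1) + 1 by omega, pow_succ]
  rw [hfacC, hpow] at E
  rw [eq_div_iff (pow_ne_zero _ hdC)]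
  refine mul_left_cancel₀ hm2 ?_
  calc ((m + 2 : ℕ) : ℂ) * (S * (d : ℂ) ^ (m + 1))
      = (((m + 2 : ℕ) : ℂ) * S) * (d : ℂ) ^ (m + 1) := by ring
    _ = ((d : ℂ) * (((m + 2 : ℕ) : ℂ) * ((m + 1).factorial : ℂ) / ((d : ℂ) ^ (m + 1) * d)))
          * (d : ℂ) ^ (m + 1) := by rw [E]
    _ = ((m + 2 : ℕ) : ℂ) * ((m + 1).factorial : ℂ) := by
        field_simp
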